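/- Let Z be a paracompact space and Y a completely metrizable space. Then the space C(Z, Y) of continuous maps with the source limitation (fine) topology is a Baire space. -/

import Mathlib

/-- The source limitation (fine) topology on `C(Z, Y)` for a metric space `Y`:
the topology generated by the variable-radius balls
`Λ(h, η) = { h' | ∀ z, dist (h z) (h' z) < η z }`, where `η` ranges over
continuous positive functions on `Z`. -/
def fineTopology (Z Y : Type) [TopologicalSpace Z] [MetricSpace Y] :
    TopologicalSpace C(Z, Y) :=
  TopologicalSpace.generateFrom
    {S | ∃ (h : C(Z, Y)) (η : C(Z, ℝ)), (∀ z, 0 < η z) ∧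
      S = {h' : C(Z, Y) | ∀ z : Z, dist (h z) (h' z) < η z}}

variable {Z Y : Type} [TopologicalSpace Z] [MetricSpace Y]

def lam (h : C(Z,Y)) (η : C(Z,ℝ)) : Set C(Z,Y) := {h' | ∀ z, dist (h z) (h' z) < η z}

lemma lam_open (h : C(Z,Y)) (η : C(Z,ℝ)) (hη : ∀ z, 0 < η z) :
    @IsOpen _ (fineTopology Z Y) (lam h η) :=
  TopologicalSpace.isOpen_generateFrom_of_mem ⟨h, η, hη, rfl⟩

lemma mem_lam_self (h : C(Z,Y)) (η : C(Z,ℝ)) (hη : ∀ z, 0 < η z) : h ∈ lam h η := by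
  intro z; simpa using hη z

lemma exists_lam_subset {U : Set C(Z,Y)} (hU : @IsOpen _ (fineTopology Z Y) U)
    {g : C(Z,Y)} (hg : g ∈ U) :
    ∃ η : C(Z,ℝ), (∀ z, 0 < η z) ∧ lam g η ⊆ U := by
  have hU' : TopologicalSpace.GenerateOpen
      {S | ∃ (h : C(Z, Y)) (η : C(Z, ℝ)), (∀ z, 0 < η z) ∧
        S = {h' : C(Z, Y) | ∀ z : Z, dist (h z) (h' z) < η z}} U := hU
  clear hU
  induction hU' with
  | basic S hS =>
    obtain ⟨h, θ, hθ, rfl⟩ := hS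
    refine ⟨⟨fun z => θ z - dist (h z) (g z), by fun_prop⟩, fun z => by
      simpa using hg z, fun h' hh' z => ?_⟩
    have := hh' z
    simp only [ContinuousMap.coe_mk] at this
    calc dist (h z) (h' z) ≤ dist (h z) (g z) + dist (g z) (h' z) := dist_triangle _ _ _
      _ < θ z := by linarith
  | univ => exact ⟨1, fun z => one_pos, fun _ _ => trivial⟩
  | inter U V _ _ ihU ihV =>
    obtain ⟨η₁, h₁, hs₁⟩ := ihU hg.1
    obtain ⟨η₂, h₂, hs₂⟩ := ihV hg.2
    refine ⟨⟨fun z => min (η₁ z) (η₂ z), by fun_prop⟩, fun z => lt_min (h₁ z) (h₂ z),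
      fun h' hh' => ⟨hs₁ fun z => ?_, hs₂ fun z => ?_⟩⟩
    · exact (hh' z).trans_le (min_le_left _ _)
    · exact (hh' z).trans_le (min_le_right _ _)
  | sUnion S _ ih =>
    obtain ⟨s, hsS, hgs⟩ := hg
    obtain ⟨η, hη, hsub⟩ := ih s hsS hgs
    exact ⟨η, hη, fun h' hh' => ⟨s, hsS, hsub hh'⟩⟩

lemma step_lemma {f : Set C(Z,Y)} (hopen : @IsOpen _ (fineTopology Z Y) f)
    (hdense : ∀ V, @IsOpen _ (fineTopology Z Y) V → V.Nonempty → (V ∩ f).Nonempty)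
    (g : C(Z,Y)) (η : C(Z,ℝ)) (hη : ∀ z, 0 < η z) :
    ∃ (g' : C(Z,Y)) (η' : C(Z,ℝ)), (∀ z, 0 < η' z) ∧
      (∀ z, dist (g z) (g' z) < η z / 4) ∧ (∀ z, η' z ≤ η z / 2) ∧ lam g' η' ⊆ f := by
  set θ : C(Z,ℝ) := ⟨fun z => η z / 4, by fun_prop⟩ with hθ
  have hθpos : ∀ z, 0 < θ z := fun z => by simp only [hθ, ContinuousMap.coe_mk]; exact div_pos (hη z) (by norm_num)
  obtain ⟨g', hg'V, hg'f⟩ := hdense (lam g θ) (lam_open g θ hθpos)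
    ⟨g, mem_lam_self g θ hθpos⟩
  obtain ⟨η'', hη''pos, hsub⟩ := exists_lam_subset
    (@IsOpen.inter _ (fineTopology Z Y) _ _ (lam_open g θ hθpos) hopen) ⟨hg'V, hg'f⟩
  refine ⟨g', ⟨fun z => min (η'' z) (η z / 2), by fun_prop⟩,
    fun z => lt_min (hη''pos z) (div_pos (hη z) (by norm_num)),
    fun z => hg'V z, fun z => min_le_right _ _, fun h' hh' => (hsub fun z => ?_).2⟩
  exact (hh' z).trans_le (min_le_left _ _)

/-- If `Z` is paracompact and `Y` is a completely metrizable space, then `C(Z, Y)`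
with the source limitation (fine) topology is a Baire space. -/
theorem stmt_6 (Z Y : Type) [TopologicalSpace Z] [ParacompactSpace Z]
    [MetricSpace Y] [CompleteSpace Y] :
    @BaireSpace C(Z, Y) (fineTopology Z Y) := by
  refine @BaireSpace.mk _ (fineTopology Z Y) fun f hopen hdense => ?_
  refine (@dense_iff_inter_open C(Z,Y) (fineTopology Z Y) (⋂ n, f n)).2 fun U hU hUne => ?_
  have hd : ∀ n V, @IsOpen _ (fineTopology Z Y) V → V.Nonempty → (V ∩ f n).Nonempty :=
    fun n => (@dense_iff_inter_open C(Z,Y) (fineTopology Z Y) (f n)).1 (hdense n)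
  obtain ⟨g0, hg0⟩ := hUne
  obtain ⟨η0', hpos0', hsub0⟩ := exists_lam_subset hU hg0
  set η0 : C(Z,ℝ) := ⟨fun z => min (η0' z) 1, by fun_prop⟩ with hη0def
  have hpos0 : ∀ z, 0 < η0 z := fun z => lt_min (hpos0' z) one_pos
  choose F G hpos hdist hle hsub using fun n => step_lemma (hopen n) (hd n)
  let T := Σ' (g : C(Z,Y)) (η : C(Z,ℝ)), ∀ z, 0 < η z
  let stp : ℕ → T → T := fun n p =>
    ⟨F n p.1 p.2.1 p.2.2, G n p.1 p.2.1 p.2.2, hpos n p.1 p.2.1 p.2.2⟩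
  let seq : ℕ → T := fun n => Nat.rec ⟨g0, η0, hpos0⟩ stp n
  set gs : ℕ → C(Z,Y) := fun n => (seq n).1 with hgs
  set es : ℕ → C(Z,ℝ) := fun n => (seq n).2.1 with hes
  have hps : ∀ n z, 0 < es n z := fun n => (seq n).2.2
  have hA : ∀ n z, dist (gs n z) (gs (n+1) z) < es n z / 4 :=
    fun n => hdist n (seq n).1 (seq n).2.1 (seq n).2.2
  have hB : ∀ n z, es (n+1) z ≤ es n z / 2 :=
    fun n => hle n (seq n).1 (seq n).2.1 (seq n).2.2
  have hC : ∀ n, lam (gs (n+1)) (es (n+1)) ⊆ f n :=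
    fun n => hsub n (seq n).1 (seq n).2.1 (seq n).2.2
  have hbound : ∀ n z, es n z ≤ (1/2)^n := by
    intro n
    induction n with
    | zero =>
      intro z
      have : es 0 z = min (η0' z) 1 := rfl
      rw [this]; simp only [pow_zero]; exact min_le_right (η0' z) 1
    | succ n ih =>
      intro z
      calc es (n+1) z ≤ es n z / 2 := hB n z
        _ ≤ (1/2)^n / 2 := by linarith [ih z]
        _ = (1/2)^(n+1) := by ring
  have hD : ∀ n m z, n ≤ m → dist (gs n z) (gs m z) ≤ es n z / 2 - es m z / 2 := by
    intro n m z h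
    induction m, h using Nat.le_induction with
    | base => simp
    | succ m hnm ih =>
      calc dist (gs n z) (gs (m+1) z)
          ≤ dist (gs n z) (gs m z) + dist (gs m z) (gs (m+1) z) := dist_triangle _ _ _
        _ ≤ (es n z/2 - es m z/2) + es m z/4 := by have := hA m z; linarith
        _ ≤ es n z/2 - es (m+1) z/2 := by have := hB m z; linarith
  have hcauchy : ∀ z, ∃ y : Y, Filter.Tendsto (fun n => gs n z) Filter.atTop (nhds y) := by
    intro z
    refine cauchySeq_tendsto_of_complete (cauchySeq_of_le_geometric (1/2) (1/4)
      (by norm_num) fun n => ?_)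
    have h1 := (hA n z).le
    have h2 := hbound n z
    calc dist (gs n z) (gs (n+1) z) ≤ es n z / 4 := h1
      _ ≤ (1/2)^n / 4 := by linarith
      _ = 1/4 * (1/2)^n := by ring
  choose gl hgl using hcauchy
  have hE : ∀ n z, dist (gs n z) (gl z) ≤ es n z / 2 := by
    intro n z
    have h1 : Filter.Tendsto (fun m => dist (gs n z) (gs m z)) Filter.atTop
        (nhds (dist (gs n z) (gl z))) := tendsto_const_nhds.dist (hgl z)
    refine le_of_tendsto h1 ?_
    filter_upwards [Filter.eventually_ge_atTop n] with m hm
    have := hD n m z hm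
    have := hps m z
    linarith
  have huc : TendstoUniformly (fun n z => gs n z) gl Filter.atTop := by
    rw [Metric.tendstoUniformly_iff]
    intro ε hε
    obtain ⟨N, hN⟩ := exists_pow_lt_of_lt_one hε (by norm_num : (1:ℝ)/2 < 1)
    filter_upwards [Filter.eventually_ge_atTop N] with n hn z
    have h1 : dist (gs n z) (gl z) ≤ es n z / 2 := hE n z
    have h2 : es n z ≤ (1/2)^n := hbound n z
    have h3 : (1/2:ℝ)^n ≤ (1/2)^N :=
      pow_le_pow_of_le_one (by norm_num) (by norm_num) hn
    rw [dist_comm]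
    calc dist (gs n z) (gl z) ≤ es n z / 2 := h1
      _ < ε := by linarith [hps n z]
  have hcont : Continuous gl :=
    huc.continuous (Filter.Eventually.of_forall fun n => (gs n).continuous).frequently
  refine ⟨⟨gl, hcont⟩, hsub0 fun z => ?_, Set.mem_iInter.2 fun n => hC n fun z => ?_⟩
  · have h1 : dist (gs 0 z) (gl z) ≤ es 0 z / 2 := hE 0 z
    have h2 : gs 0 = g0 := rfl
    have h3 : es 0 z = min (η0' z) 1 := rfl
    rw [h2] at h1
    rw [h3] at h1
    have h4 : min (η0' z) 1 ≤ η0' z := min_le_left _ _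
    have := hpos0' z
    show dist (g0 z) (gl z) < η0' z
    have h5 : (0:ℝ) < min (η0' z) 1 := lt_min this one_pos
    linarith
  · have h1 := hE (n+1) z
    have h2 := hps (n+1) z
    show dist (gs (n+1) z) (gl z) < es (n+1) z
    linarith
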